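/- The function φ(x) = c ((x^ρ−a^ρ)/ρ)^{γ−1} E_{α,γ}[λ ((x^ρ−a^ρ)/ρ)^{α}] solves the homogeneous Cauchy problem (ρD_{a+}^{α,β} φ)(x) = λ φ(x) for x ∈ (a,b], with initial condition lim_{x→a+} (ρJ_{a+}^{1−γ} φ)(x) = c, where 0<α<1, 0≤β≤1, γ = α+β(1−α), ρ>0, λ, c ∈ ℝ. -/

import Mathlib

open Real MeasureTheory Set Filter Topology

/-- Generalized (Katugampola) fractional integral; identity for `α = 0`. -/
noncomputable def igral (ρ α a : ℝ) (φ : ℝ → ℝ) (x : ℝ) : ℝ :=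
  if α = 0 then φ x
  else ρ ^ (1 - α) / Real.Gamma α * ∫ t in a..x, t ^ (ρ - 1) * φ t * (x ^ ρ - t ^ ρ) ^ (α - 1)

/-- Generalized (Katugampola) fractional derivative of order `α ∈ (0,1)`. -/
noncomputable def genD (ρ α a : ℝ) (φ : ℝ → ℝ) (x : ℝ) : ℝ :=
  x ^ (1 - ρ) * deriv (igral ρ (1 - α) a φ) x

/-- Hilfer–Katugampola fractional derivative of order `α` and type `β`. -/
noncomputable def hkD (ρ α β a : ℝ) (φ : ℝ → ℝ) : ℝ → ℝ :=
  igral ρ (β * (1 - α)) a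
    (fun s => s ^ (1 - ρ) * deriv (igral ρ ((1 - β) * (1 - α)) a φ) s)

/-- Membership in the weighted space `C_{γ,ρ}[a,b]`. -/
def MemW (ρ γ a b : ℝ) (φ : ℝ → ℝ) : Prop :=
  ∃ h : ℝ → ℝ, ContinuousOn h (Icc a b) ∧
    ∀ x ∈ Ioc a b, h x = ((x ^ ρ - a ^ ρ) / ρ) ^ γ * φ x

/-- Weighted sup-norm on `C_{γ,ρ}[a,b]`. -/
noncomputable def wnorm (ρ γ a b : ℝ) (φ : ℝ → ℝ) : ℝ :=
  sSup ((fun x => |((x ^ ρ - a ^ ρ) / ρ) ^ γ * φ x|) '' Ioc a b)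

section Aux

lemma gamma_ratio {α x : ℝ} (hα0 : 0 < α) (hα1 : α < 1) (hx : 0 < x) :
    x * Real.Gamma x ≤ Real.Gamma (x + α) * (x + α) ^ ((1:ℝ) - α) := by
  have hxα : (0:ℝ) < x + α := by linarith
  have hxα1 : (0:ℝ) < x + α + 1 := by linarith
  have hkey := Real.convexOn_log_Gamma.2 (mem_Ioi.2 hxα) (mem_Ioi.2 hxα1)
    (le_of_lt hα0) (by linarith : (0:ℝ) ≤ 1 - α) (by ring)
  have hcomb : α • (x + α) + (1 - α) • (x + α + 1) = x + 1 := by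
    simp only [smul_eq_mul]; ring
  rw [hcomb] at hkey
  simp only [Function.comp_apply, smul_eq_mul] at hkey
  have hG1 : Real.Gamma (x + 1) = x * Real.Gamma x := Real.Gamma_add_one hx.ne'
  have hG2 : Real.Gamma (x + α + 1) = (x + α) * Real.Gamma (x + α) := Real.Gamma_add_one hxα.ne'
  have hGpos : 0 < Real.Gamma (x + α) := Real.Gamma_pos_of_pos hxα
  have hGpos1 : 0 < Real.Gamma (x + 1) := Real.Gamma_pos_of_pos (by linarith)
  rw [hG2, Real.log_mul hxα.ne' hGpos.ne'] at hkey
  have hkey2 : Real.log (Real.Gamma (x + 1)) ≤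
      Real.log (Real.Gamma (x + α)) + (1 - α) * Real.log (x + α) := by nlinarith
  have := Real.exp_le_exp.2 hkey2
  rw [Real.exp_log hGpos1, Real.exp_add, Real.exp_log hGpos] at this
  rw [← hG1]
  calc Real.Gamma (x+1) ≤ Real.Gamma (x+α) * Real.exp ((1-α) * Real.log (x+α)) := this
    _ = Real.Gamma (x+α) * (x+α) ^ ((1:ℝ)-α) := by
        rw [Real.rpow_def_of_pos hxα, mul_comm (1-α)]

lemma summable_ml {α μ : ℝ} (hα0 : 0 < α) (hα1 : α < 1) (hμ : 0 < μ) (z : ℝ) :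
    Summable (fun k : ℕ => z ^ k / Real.Gamma (α * k + μ)) := by
  have hG : ∀ k : ℕ, 0 < Real.Gamma (α * k + μ) := fun k =>
    Real.Gamma_pos_of_pos (by positivity)
  rcases eq_or_lt_of_le (abs_nonneg z) with hz | hz
  · have hz0 : z = 0 := abs_eq_zero.1 hz.symm
    subst hz0
    apply (summable_nat_add_iff 1).1
    exact summable_zero.congr fun n => by simp [zero_pow (Nat.succ_ne_zero n)]
  · set q := |z| with hq
    have key : Summable (fun k : ℕ => q ^ k / Real.Gamma (α * k + μ)) := by
      apply summable_of_ratio_test_tendsto_lt_one (l := 0) one_pos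
      · exact Eventually.of_forall fun k => by positivity
      · have hxk : ∀ k : ℕ, (0:ℝ) < α * k + μ := fun k => by positivity
        have hupper : Tendsto (fun k : ℕ => q * 2 ^ ((1:ℝ) - α) * (α * k + μ) ^ (-α))
            atTop (𝓝 0) := by
          have h1 : Tendsto (fun k : ℕ => α * k + μ) atTop atTop :=
            tendsto_atTop_add_const_right _ μ (tendsto_natCast_atTop_atTop.const_mul_atTop hα0)
          have h2 := (tendsto_rpow_neg_atTop hα0).comp h1
          have := h2.const_mul (q * 2 ^ ((1:ℝ) - α))
          simpa using this
        apply tendsto_of_tendsto_of_tendsto_of_le_of_le' tendsto_const_nhds hupper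
        · exact Eventually.of_forall fun k => by positivity
        · filter_upwards [eventually_ge_atTop 1] with k hk
          have hx := hxk k
          set x := α * k + μ with hxdef
          have hxα : α ≤ x := by
            have : (1:ℝ) ≤ (k:ℝ) := by exact_mod_cast hk
            nlinarith
          have e1 : ‖q ^ (k+1) / Real.Gamma (α * ((k+1:ℕ):ℝ) + μ)‖ / ‖q ^ k / Real.Gamma (α * k + μ)‖
              = q * (Real.Gamma x / Real.Gamma (x + α)) := by
            have hGk := hG k
            have hq0 : 0 < q ^ k := pow_pos hz k
            have hseq : α * ((k:ℝ)+1) + μ = x + α := by push_cast; ring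
            rw [norm_div, norm_div, norm_pow, norm_pow]
            push_cast
            rw [hseq]
            have hGxα : 0 < Real.Gamma (x + α) := Real.Gamma_pos_of_pos (by linarith)
            rw [Real.norm_eq_abs, Real.norm_eq_abs, Real.norm_eq_abs,
              abs_of_pos hGxα, abs_of_pos hGk, abs_of_pos hz]
            field_simp
            ring
          rw [e1]
          have hGx : 0 < Real.Gamma x := Real.Gamma_pos_of_pos hx
          have hGxα : 0 < Real.Gamma (x + α) := Real.Gamma_pos_of_pos (by linarith)
          have hr1 : Real.Gamma x / Real.Gamma (x + α) ≤ (x + α) ^ ((1:ℝ) - α) / x := by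
            have := gamma_ratio hα0 hα1 hx
            rw [div_le_div_iff₀ hGxα hx]
            nlinarith
          have hr2 : (x + α) ^ ((1:ℝ) - α) / x ≤ 2 ^ ((1:ℝ)-α) * x ^ (-α) := by
            have hb : (x + α) ^ ((1:ℝ)-α) ≤ (2*x) ^ ((1:ℝ)-α) := by
              apply Real.rpow_le_rpow (by linarith) (by linarith) (by linarith)
            have h2x : ((2:ℝ)*x) ^ ((1:ℝ)-α) = 2 ^ ((1:ℝ)-α) * x ^ ((1:ℝ)-α) :=
              Real.mul_rpow (by norm_num) hx.le
            have hxx : x ^ ((1:ℝ)-α) / x = x ^ (-α) := by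
              rw [div_eq_iff hx.ne', ← Real.rpow_add_one hx.ne']; ring_nf
            calc (x + α) ^ ((1:ℝ)-α) / x ≤ (2*x) ^ ((1:ℝ)-α) / x := by gcongr
              _ = 2 ^ ((1:ℝ)-α) * (x ^ ((1:ℝ)-α) / x) := by rw [h2x]; ring
              _ = 2 ^ ((1:ℝ)-α) * x ^ (-α) := by rw [hxx]
          calc q * (Real.Gamma x / Real.Gamma (x+α)) ≤ q * ((x+α)^((1:ℝ)-α)/x) := by
                apply mul_le_mul_of_nonneg_left hr1 hz.le
            _ ≤ q * (2^((1:ℝ)-α) * x ^ (-α)) := mul_le_mul_of_nonneg_left hr2 hz.le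
            _ = q * 2^((1:ℝ)-α) * x ^ (-α) := by ring
    have habs : Summable (fun k : ℕ => |z ^ k / Real.Gamma (α * k + μ)|) :=
      key.congr fun k => by rw [abs_div, abs_pow, abs_of_pos (hG k)]
    exact habs.of_abs

lemma cpow_real_eq {w : ℝ} (hw : 0 ≤ w) (e : ℝ) :
    (w:ℂ) ^ ((e:ℂ) - 1) = ((w ^ (e-1) : ℝ) : ℂ) := by
  rw [Complex.ofReal_cpow hw]; push_cast; ring_nf

lemma beta_integrable {u v : ℝ} (hu : 0 < u) (hv : 0 < v) :
    IntegrableOn (fun w : ℝ => w ^ (u - 1) * (1 - w) ^ (v - 1)) (Ioo 0 1) := by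
  have hc : IntervalIntegrable (fun x : ℝ => (x:ℂ) ^ ((u:ℂ) - 1) * ((1:ℂ) - x) ^ ((v:ℂ) - 1))
      volume 0 1 := Complex.betaIntegral_convergent (by simpa using hu) (by simpa using hv)
  have hIoc : IntegrableOn (fun x : ℝ => (x:ℂ) ^ ((u:ℂ) - 1) * ((1:ℂ) - x) ^ ((v:ℂ) - 1))
      (Ioc 0 1) := by
    rw [intervalIntegrable_iff_integrableOn_Ioc_of_le (by norm_num : (0:ℝ) ≤ 1)] at hc
    exact hc
  have hre : IntegrableOn (fun x : ℝ => ((x:ℂ) ^ ((u:ℂ) - 1) * ((1:ℂ) - x) ^ ((v:ℂ) - 1)).re)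
      (Ioc 0 1) := hIoc.re
  have h2 := hre.mono_set Ioo_subset_Ioc_self
  apply h2.congr_fun ?_ measurableSet_Ioo
  intro w hw
  have hw1 : (0:ℝ) ≤ 1 - w := by linarith [hw.2]
  have e2 : ((1:ℂ) - w) = (((1:ℝ) - w : ℝ) : ℂ) := by push_cast; ring
  dsimp only
  rw [cpow_real_eq hw.1.le u, e2, cpow_real_eq hw1 v, ← Complex.ofReal_mul, Complex.ofReal_re]

lemma beta_value {u v : ℝ} (hu : 0 < u) (hv : 0 < v) :
    ∫ w in Ioo (0:ℝ) 1, w ^ (u - 1) * (1 - w) ^ (v - 1)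
      = Real.Gamma u * Real.Gamma v / Real.Gamma (u + v) := by
  have key := Complex.Gamma_mul_Gamma_eq_betaIntegral
    (s := (u:ℂ)) (t := (v:ℂ)) (by simpa using hu) (by simpa using hv)
  have hbeta : Complex.betaIntegral u v
      = ((∫ w in Ioo (0:ℝ) 1, w ^ (u - 1) * (1 - w) ^ (v - 1) : ℝ) : ℂ) := by
    rw [Complex.betaIntegral,
      intervalIntegral.integral_of_le (by norm_num : (0:ℝ) ≤ 1),
      ← MeasureTheory.integral_Ioc_eq_integral_Ioo
        (f := fun w : ℝ => w ^ (u - 1) * (1 - w) ^ (v - 1))]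
    have step : ∫ w in Ioc (0:ℝ) 1, (w:ℂ) ^ ((u:ℂ) - 1) * ((1:ℂ) - w) ^ ((v:ℂ) - 1)
        = ∫ w in Ioc (0:ℝ) 1, (((w ^ (u-1) * (1 - w) ^ (v-1) : ℝ)) : ℂ) := by
      apply setIntegral_congr_fun measurableSet_Ioc
      intro w hw
      have hw1 : (0:ℝ) ≤ 1 - w := by linarith [hw.2]
      have e2 : ((1:ℂ) - w) = (((1:ℝ) - w : ℝ) : ℂ) := by push_cast; ring
      dsimp only
      rw [cpow_real_eq hw.1.le u, e2, cpow_real_eq hw1 v, ← Complex.ofReal_mul]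
    rw [step]
    exact integral_ofReal
  rw [hbeta, Complex.Gamma_ofReal, Complex.Gamma_ofReal, ← Complex.ofReal_add,
    Complex.Gamma_ofReal, ← Complex.ofReal_mul, ← Complex.ofReal_mul] at key
  have huv : 0 < Real.Gamma (u + v) := Real.Gamma_pos_of_pos (by linarith)
  have hr := Complex.ofReal_injective key
  field_simp
  linarith [hr]

lemma intA {ρ a x ν σ : ℝ} (hρ : 0 < ρ) (ha : 0 < a) (hax : a < x)
    (hν : 0 < ν) (hσ : 0 < σ) :
    IntegrableOn (fun t => t ^ (ρ-1) * ((t^ρ - a^ρ)/ρ) ^ (ν-1) * (x^ρ - t^ρ) ^ (σ-1))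
      (Ioc a x) ∧
    ∫ t in Ioc a x, t ^ (ρ-1) * ((t^ρ - a^ρ)/ρ) ^ (ν-1) * (x^ρ - t^ρ) ^ (σ-1)
      = Real.Gamma ν * Real.Gamma σ / Real.Gamma (ν+σ) * ρ^(σ-1) * ((x^ρ - a^ρ)/ρ)^(ν+σ-1) := by
  have hx0 : 0 < x := ha.trans hax
  set A := a ^ ρ with hA
  set X := x ^ ρ with hX
  have hA0 : 0 < A := Real.rpow_pos_of_pos ha ρ
  have hAX : A < X := Real.rpow_lt_rpow ha.le hax hρ
  have hXA : 0 < X - A := by linarith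
  set U := (X - A) / ρ with hU
  have hU0 : 0 < U := div_pos hXA hρ
  set f : ℝ → ℝ := fun t => (t ^ ρ - A) / (X - A) with hf
  set f' : ℝ → ℝ := fun t => ρ * t ^ (ρ-1) / (X - A) with hf'
  set g : ℝ → ℝ := fun w => ρ^(σ-1) * U^(ν+σ-1) * (w^(ν-1) * (1-w)^(σ-1)) with hg
  have hder : ∀ t ∈ Ioo a x, HasDerivWithinAt f (f' t) (Ioo a x) t := by
    intro t ht
    have ht0 : 0 < t := ha.trans ht.1
    exact (((Real.hasDerivAt_rpow_const (x := t) (p := ρ)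
      (Or.inl ht0.ne')).sub_const A).div_const (X - A)).hasDerivWithinAt
  have hinj : InjOn f (Ioo a x) := by
    intro t₁ h₁ t₂ h₂ he
    have ht₁ : 0 < t₁ := ha.trans h₁.1
    have ht₂ : 0 < t₂ := ha.trans h₂.1
    have h3 : t₁ ^ ρ = t₂ ^ ρ := by
      simp only [hf] at he
      field_simp [hXA.ne'] at he; linarith
    calc t₁ = (t₁ ^ ρ) ^ ρ⁻¹ := (Real.rpow_rpow_inv ht₁.le hρ.ne').symm
      _ = (t₂ ^ ρ) ^ ρ⁻¹ := by rw [h3]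
      _ = t₂ := Real.rpow_rpow_inv ht₂.le hρ.ne'
  have himg : f '' Ioo a x = Ioo 0 1 := by
    ext w
    constructor
    · rintro ⟨t, ht, rfl⟩
      have h1 : A < t ^ ρ := Real.rpow_lt_rpow ha.le ht.1 hρ
      have h2 : t ^ ρ < X := Real.rpow_lt_rpow (ha.trans ht.1).le ht.2 hρ
      exact ⟨div_pos (by linarith) hXA, (div_lt_one hXA).2 (by linarith)⟩
    · intro hw
      refine ⟨(A + w * (X - A)) ^ ρ⁻¹, ⟨?_, ?_⟩, ?_⟩
      · have : A < A + w * (X - A) := by nlinarith [hw.1, hw.2]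
        calc a = (a ^ ρ) ^ ρ⁻¹ := (Real.rpow_rpow_inv ha.le hρ.ne').symm
          _ < (A + w * (X - A)) ^ ρ⁻¹ := by
            apply Real.rpow_lt_rpow hA0.le this (by positivity)
      · have : A + w * (X - A) < X := by nlinarith [hw.1, hw.2]
        calc (A + w * (X - A)) ^ ρ⁻¹ < (x ^ ρ) ^ ρ⁻¹ := by
              apply Real.rpow_lt_rpow (by nlinarith [hw.1]) this (by positivity)
          _ = x := Real.rpow_rpow_inv hx0.le hρ.ne'
      · have hpos : (0:ℝ) ≤ A + w * (X - A) := by nlinarith [hw.1]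
        simp only [hf]
        rw [Real.rpow_inv_rpow hpos hρ.ne']
        field_simp
        ring
  have hpt : ∀ t ∈ Ioo a x,
      t ^ (ρ-1) * ((t^ρ - a^ρ)/ρ) ^ (ν-1) * (x^ρ - t^ρ) ^ (σ-1) = |f' t| • g (f t) := by
    intro t ht
    have ht0 : 0 < t := ha.trans ht.1
    have h1 : A < t ^ ρ := Real.rpow_lt_rpow ha.le ht.1 hρ
    have h2 : t ^ ρ < X := Real.rpow_lt_rpow ht0.le ht.2 hρ
    set w := f t with hw
    have hw0 : 0 < w := div_pos (by linarith) hXA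
    have hw1 : w < 1 := (div_lt_one hXA).2 (by linarith)
    have htρ : 0 < t ^ (ρ-1) := Real.rpow_pos_of_pos ht0 _
    have habs : |f' t| = ρ * t ^ (ρ-1) / (X - A) := by
      rw [abs_of_pos]; positivity
    have ht1 : (t^ρ - A)/ρ = U * w := by
      simp only [hw, hf, hU]; field_simp
    have ht2 : X - t^ρ = (ρ * U) * (1-w) := by
      simp only [hw, hf, hU]; field_simp; ring
    rw [smul_eq_mul, habs]
    simp only [hg]
    rw [ht1, ht2,
      Real.mul_rpow hU0.le hw0.le,
      Real.mul_rpow (by positivity : (0:ℝ) ≤ ρ * U) (by linarith : (0:ℝ) ≤ 1 - w),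
      Real.mul_rpow hρ.le hU0.le]
    have e3 : U^(ν+σ-1) = U^(ν-1) * U^(σ-1) * U := by
      rw [← Real.rpow_add hU0, ← Real.rpow_add_one hU0.ne']
      ring_nf
    rw [e3, hU]
    field_simp
  have hgi : IntegrableOn g (Ioo 0 1) := by
    apply Integrable.const_mul
    exact beta_integrable hν hσ
  have hiff := integrableOn_image_iff_integrableOn_abs_deriv_smul
    measurableSet_Ioo hder hinj g
  rw [himg] at hiff
  have hint2 : IntegrableOn (fun t => |f' t| • g (f t)) (Ioo a x) := hiff.1 hgi
  have hint : IntegrableOn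
      (fun t => t ^ (ρ-1) * ((t^ρ - a^ρ)/ρ) ^ (ν-1) * (x^ρ - t^ρ) ^ (σ-1)) (Ioo a x) := by
    exact (hint2.congr_fun (fun t ht => (hpt t ht).symm) measurableSet_Ioo)
  have hval := integral_image_eq_integral_abs_deriv_smul measurableSet_Ioo hder hinj g
  rw [himg] at hval
  have hval2 : ∫ w in Ioo (0:ℝ) 1, g w
      = ρ^(σ-1) * U^(ν+σ-1) * (Real.Gamma ν * Real.Gamma σ / Real.Gamma (ν+σ)) := by
    simp only [hg]
    rw [MeasureTheory.integral_const_mul, beta_value hν hσ]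
  constructor
  · rw [integrableOn_Ioc_iff_integrableOn_Ioo]; exact hint
  · rw [MeasureTheory.integral_Ioc_eq_integral_Ioo,
      setIntegral_congr_fun measurableSet_Ioo hpt, ← hval, hval2]
    ring

lemma igral_phi {α μ σ ρ a lam d x : ℝ} (hα0 : 0 < α) (hα1 : α < 1) (hμ : 0 < μ)
    (hσ : 0 ≤ σ) (hρ : 0 < ρ) (ha : 0 < a) (hax : a < x) :
    igral ρ σ a (fun y => d * ((y^ρ - a^ρ)/ρ)^(μ-1) *
        ∑' k : ℕ, (lam * ((y^ρ - a^ρ)/ρ)^α)^k / Real.Gamma (α*k+μ)) x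
      = d * ((x^ρ - a^ρ)/ρ)^(μ+σ-1) *
        ∑' k : ℕ, (lam * ((x^ρ - a^ρ)/ρ)^α)^k / Real.Gamma (α*k+(μ+σ)) := by
  rcases eq_or_lt_of_le hσ with hσ0 | hσ0
  · rw [igral, if_pos hσ0.symm, ← hσ0, add_zero]
  have hx0 : 0 < x := ha.trans hax
  have hA0 : 0 < a ^ ρ := Real.rpow_pos_of_pos ha ρ
  have hAX : a ^ ρ < x ^ ρ := Real.rpow_lt_rpow ha.le hax hρ
  set U := (x^ρ - a^ρ)/ρ with hUdef
  have hU0 : 0 < U := div_pos (by linarith) hρ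
  have hGσ : 0 < Real.Gamma σ := Real.Gamma_pos_of_pos hσ0
  have hGμσ : ∀ k : ℕ, 0 < Real.Gamma (α*k+(μ+σ)) := fun k =>
    Real.Gamma_pos_of_pos (by positivity)
  have hGμ : ∀ k : ℕ, 0 < Real.Gamma (α*k+μ) := fun k =>
    Real.Gamma_pos_of_pos (by positivity)
  set F : ℕ → ℝ → ℝ := fun k t => (d * lam^k / Real.Gamma (α*k+μ)) *
      (t^(ρ-1) * ((t^ρ - a^ρ)/ρ)^(α*k+μ-1) * (x^ρ - t^ρ)^(σ-1)) with hF
  rw [igral, if_neg hσ0.ne', intervalIntegral.integral_of_le hax.le]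
  have hcongr : ∀ t ∈ Ioc a x,
      t ^ (ρ - 1) * ((fun y => d * ((y^ρ - a^ρ)/ρ)^(μ-1) *
        ∑' k : ℕ, (lam * ((y^ρ - a^ρ)/ρ)^α)^k / Real.Gamma (α*k+μ)) t) *
        (x ^ ρ - t ^ ρ) ^ (σ - 1) = ∑' k : ℕ, F k t := by
    intro t ht
    have ht0 : 0 < t := ha.trans ht.1
    have hut : 0 < (t^ρ - a^ρ)/ρ :=
      div_pos (by linarith [Real.rpow_lt_rpow ha.le ht.1 hρ]) hρ
    set u := (t^ρ - a^ρ)/ρ with hu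
    dsimp only
    rw [show t ^ (ρ-1) * (d * u^(μ-1) * ∑' k : ℕ, (lam * u^α)^k / Real.Gamma (α*k+μ))
          * (x^ρ - t^ρ)^(σ-1)
        = ∑' k : ℕ, (t ^ (ρ-1) * (d * u^(μ-1)) * (x^ρ - t^ρ)^(σ-1))
            * ((lam * u^α)^k / Real.Gamma (α*k+μ)) by
      rw [tsum_mul_left]; ring]
    apply tsum_congr
    intro k
    have e1 : (u^α)^k = u^(α*k) := by
      rw [← Real.rpow_natCast (u^α) k, ← Real.rpow_mul hut.le]
    have e2 : u^(μ-1) * u^(α*k) = u^(α*k+μ-1) := by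
      rw [← Real.rpow_add hut]; ring_nf
    simp only [hF]
    rw [mul_pow, e1]
    field_simp
    rw [← e2]
    ring
  rw [setIntegral_congr_fun measurableSet_Ioc hcongr]
  have hmeas : ∀ k : ℕ, AEStronglyMeasurable (F k) (volume.restrict (Ioc a x)) := by
    intro k
    rw [← Measure.restrict_congr_set Ioo_ae_eq_Ioc]
    apply ContinuousOn.aestronglyMeasurable ?_ measurableSet_Ioo
    intro t ht
    have ht0 : 0 < t := ha.trans ht.1
    have hut : 0 < (t^ρ - a^ρ)/ρ :=
      div_pos (by linarith [Real.rpow_lt_rpow ha.le ht.1 hρ]) hρ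
    have hxt : 0 < x^ρ - t^ρ := by
      linarith [Real.rpow_lt_rpow ht0.le ht.2 hρ]
    have c1 : ContinuousAt (fun t : ℝ => t ^ (ρ-1)) t :=
      Real.continuousAt_rpow_const t _ (Or.inl ht0.ne')
    have cu : ContinuousAt (fun t : ℝ => (t^ρ - a^ρ)/ρ) t :=
      (((Real.continuousAt_rpow_const t ρ (Or.inl ht0.ne')).sub
        continuousAt_const).div_const ρ)
    have c2 : ContinuousAt (fun t : ℝ => ((t^ρ - a^ρ)/ρ) ^ (α*k+μ-1)) t :=
      cu.rpow_const (Or.inl hut.ne')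
    have cX : ContinuousAt (fun t : ℝ => x^ρ - t^ρ) t :=
      continuousAt_const.sub (Real.continuousAt_rpow_const t ρ (Or.inl ht0.ne'))
    have c3 : ContinuousAt (fun t : ℝ => (x^ρ - t^ρ) ^ (σ-1)) t :=
      cX.rpow_const (Or.inl hxt.ne')
    exact (continuousAt_const.mul ((c1.mul c2).mul c3)).continuousWithinAt
  have hintk : ∀ k : ℕ, IntegrableOn
      (fun t => t^(ρ-1) * ((t^ρ - a^ρ)/ρ)^(α*k+μ-1) * (x^ρ - t^ρ)^(σ-1)) (Ioc a x) :=
    fun k => (intA hρ ha hax (by positivity) hσ0).1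
  have hFint : ∀ k : ℕ, IntegrableOn (F k) (Ioc a x) := by
    intro k
    exact (hintk k).const_mul _
  have hnorm : ∀ k : ℕ, ∫ t in Ioc a x, ‖F k t‖
      = (|d| * Real.Gamma σ * ρ^(σ-1) * U^(μ+σ-1)) *
        ((|lam| * U^α)^k / Real.Gamma (α*k+(μ+σ))) := by
    intro k
    have hn : ∀ t ∈ Ioc a x, ‖F k t‖ = (|d| * |lam|^k / Real.Gamma (α*k+μ)) *
        (t^(ρ-1) * ((t^ρ - a^ρ)/ρ)^(α*k+μ-1) * (x^ρ - t^ρ)^(σ-1)) := by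
      intro t ht
      have ht0 : 0 < t := ha.trans ht.1
      have hut : 0 ≤ (t^ρ - a^ρ)/ρ :=
        (div_pos (by linarith [Real.rpow_lt_rpow ha.le ht.1 hρ]) hρ).le
      have hxt : 0 ≤ x^ρ - t^ρ := by
        have := Real.rpow_le_rpow ht0.le ht.2 hρ.le
        linarith
      have hprod : 0 ≤ t^(ρ-1) * ((t^ρ - a^ρ)/ρ)^(α*k+μ-1) * (x^ρ - t^ρ)^(σ-1) := by
        apply mul_nonneg (mul_nonneg (Real.rpow_nonneg ht0.le _)
          (Real.rpow_nonneg hut _)) (Real.rpow_nonneg hxt _)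
      simp only [hF]
      rw [Real.norm_eq_abs, abs_mul, abs_of_nonneg hprod, abs_div, abs_mul,
        abs_of_pos (hGμ k), abs_pow]
    rw [setIntegral_congr_fun measurableSet_Ioc hn, MeasureTheory.integral_const_mul,
      (intA hρ ha hax (by positivity : (0:ℝ) < α*k+μ) hσ0).2]
    have eU : U^(α*k+μ+σ-1) = U^(α*(k:ℝ)) * U^(μ+σ-1) := by
      rw [← Real.rpow_add hU0]; ring_nf
    have eUα : (|lam| * U^α)^k = |lam|^k * U^(α*(k:ℝ)) := by
      rw [mul_pow, ← Real.rpow_natCast (U^α) k, ← Real.rpow_mul hU0.le]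
    rw [show α*(k:ℝ)+μ+σ = α*(k:ℝ)+(μ+σ) by ring] at *
    rw [eU, eUα]
    field_simp [(hGμ k).ne', (hGμσ k).ne']
  have hsum_b : Summable (fun k : ℕ => (|d| * Real.Gamma σ * ρ^(σ-1) * U^(μ+σ-1)) *
      ((|lam| * U^α)^k / Real.Gamma (α*k+(μ+σ)))) := by
    exact (summable_ml hα0 hα1 (by positivity) _).mul_left _
  have hlint : ∑' k : ℕ, ∫⁻ t, ‖F k t‖₊ ∂(volume.restrict (Ioc a x)) ≠ ⊤ := by
    have heq : ∀ k : ℕ, ∫⁻ t, ‖F k t‖₊ ∂(volume.restrict (Ioc a x))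
        = ENNReal.ofReal ((|d| * Real.Gamma σ * ρ^(σ-1) * U^(μ+σ-1)) *
          ((|lam| * U^α)^k / Real.Gamma (α*k+(μ+σ)))) := by
      intro k
      simp only [← enorm_eq_nnnorm]
      rw [← MeasureTheory.ofReal_integral_norm_eq_lintegral_enorm (hFint k), hnorm k]
    rw [tsum_congr heq, ← ENNReal.ofReal_tsum_of_nonneg (fun k => by positivity) hsum_b]
    exact ENNReal.ofReal_ne_top
  rw [MeasureTheory.integral_tsum hmeas hlint]
  have hInt : ∀ k : ℕ, ∫ t in Ioc a x, F k t
      = (d * lam^k / Real.Gamma (α*k+μ)) *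
        (Real.Gamma (α*k+μ) * Real.Gamma σ / Real.Gamma (α*k+μ+σ) * ρ^(σ-1)
          * U^(α*k+μ+σ-1)) := by
    intro k
    simp only [hF]
    rw [MeasureTheory.integral_const_mul,
      (intA hρ ha hax (by positivity : (0:ℝ) < α*k+μ) hσ0).2]
  rw [tsum_congr hInt, ← tsum_mul_left (a := ρ ^ (1-σ) / Real.Gamma σ),
    show d * U^(μ+σ-1) * (∑' k : ℕ, (lam * U^α)^k / Real.Gamma (α*k+(μ+σ)))
      = ∑' k : ℕ, d * U^(μ+σ-1) * ((lam * U^α)^k / Real.Gamma (α*k+(μ+σ))) by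
        rw [tsum_mul_left]]
  apply tsum_congr
  intro k
  have eU : U^(α*k+μ+σ-1) = U^(α*(k:ℝ)) * U^(μ+σ-1) := by
    rw [← Real.rpow_add hU0]; ring_nf
  have eUα : (lam * U^α)^k = lam^k * U^(α*(k:ℝ)) := by
    rw [mul_pow, ← Real.rpow_natCast (U^α) k, ← Real.rpow_mul hU0.le]
  have eρ : ρ^((1:ℝ)-σ) * ρ^(σ-1) = 1 := by
    rw [← Real.rpow_add hρ]; norm_num
  rw [show α*(k:ℝ)+μ+σ = α*(k:ℝ)+(μ+σ) by ring] at *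
  rw [eU, eUα]
  field_simp [(hGμ k).ne', (hGμσ k).ne', hGσ.ne']
  linear_combination (d * lam^k) * eρ

lemma norm_deriv_term_le {α μ : ℝ} (hα0 : 0 < α) (hμ : 0 < μ) {R : ℝ} (hR : 1 ≤ R) (k : ℕ)
    {w : ℝ} (hw : |w| ≤ R) :
    ‖((k:ℝ) * w^(k-1)) / Real.Gamma (α*k+μ)‖ ≤ (2*R)^k / Real.Gamma (α*k+μ) := by
  have hG : 0 < Real.Gamma (α*k+μ) := Real.Gamma_pos_of_pos (by positivity)
  rw [Real.norm_eq_abs, abs_div, abs_of_pos hG, abs_mul, abs_pow, Nat.abs_cast]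
  gcongr
  have h1 : ((k:ℝ)) ≤ 2^k := by exact_mod_cast (Nat.lt_two_pow_self (n := k)).le
  have h2 : |w|^(k-1) ≤ R^(k-1) := pow_le_pow_left₀ (abs_nonneg w) hw _
  have h3 : R^(k-1) ≤ R^k := pow_le_pow_right₀ hR (Nat.sub_le k 1)
  calc (k:ℝ) * |w|^(k-1) ≤ 2^k * R^k :=
        mul_le_mul h1 (h2.trans h3) (pow_nonneg (abs_nonneg w) _) (by positivity)
    _ = (2*R)^k := (mul_pow 2 R k).symm

lemma summable_deriv_ml {α μ : ℝ} (hα0 : 0 < α) (hα1 : α < 1) (hμ : 0 < μ) (z : ℝ) :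
    Summable (fun k : ℕ => ((k:ℝ) * z^(k-1)) / Real.Gamma (α*k+μ)) := by
  apply Summable.of_norm_bounded (summable_ml hα0 hα1 hμ (2*(|z|+1)))
  intro k
  have h1 : (1:ℝ) ≤ |z|+1 := by linarith [abs_nonneg z]
  have h2 : |z| ≤ |z|+1 := by linarith
  exact norm_deriv_term_le hα0 hμ h1 k h2 (α := α)

lemma G_hasDerivAt {α μ : ℝ} (hα0 : 0 < α) (hα1 : α < 1) (hμ : 0 < μ) (z : ℝ) :
    HasDerivAt (fun w : ℝ => ∑' k : ℕ, w^k / Real.Gamma (α*k+μ))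
      (∑' k : ℕ, ((k:ℝ) * z^(k-1)) / Real.Gamma (α*k+μ)) z := by
  set R := |z| + 1 with hR
  have hR1 : (1:ℝ) ≤ R := by linarith [abs_nonneg z]
  apply hasDerivAt_tsum_of_isPreconnected
    (u := fun k : ℕ => (2*R)^k / Real.Gamma (α*k+μ))
    (summable_ml hα0 hα1 hμ (2*R)) Metric.isOpen_ball (convex_ball (0:ℝ) R).isPreconnected
    (g' := fun k w => ((k:ℝ) * w^(k-1)) / Real.Gamma (α*k+μ))
    (y₀ := z)
  · intro k w hw
    exact (hasDerivAt_pow k w).div_const _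
  · intro k w hw
    have hwR : |w| ≤ R := by
      rw [Metric.mem_ball, Real.dist_eq, sub_zero] at hw
      exact hw.le
    exact norm_deriv_term_le hα0 hμ hR1 k hwR
  · rw [Metric.mem_ball, Real.dist_eq, sub_zero]
    linarith [abs_nonneg z]
  · exact summable_ml hα0 hα1 hμ z
  · rw [Metric.mem_ball, Real.dist_eq, sub_zero]
    linarith [abs_nonneg z]

lemma series_shift {α : ℝ} (hα0 : 0 < α) (hα1 : α < 1) (z : ℝ) :
    α * ∑' k : ℕ, ((k:ℝ) * z^(k-1)) / Real.Gamma (α*k+1)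
      = ∑' k : ℕ, z^k / Real.Gamma (α*k+α) := by
  have hsum := (summable_deriv_ml hα0 hα1 one_pos z).mul_left α
  rw [← tsum_mul_left]
  rw [Summable.tsum_eq_zero_add hsum]
  simp only [Nat.cast_zero, zero_mul, zero_div, mul_zero, zero_add]
  apply tsum_congr
  intro k
  have hαk : (0:ℝ) < α*k+α := by positivity
  have hcast : α * ((k:ℕ)+1 : ℕ) + 1 = (α*k+α) + 1 := by push_cast; ring
  rw [hcast, Real.Gamma_add_one hαk.ne']
  have hsub : ((k:ℕ)+1 : ℕ) - 1 = k := by omega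
  rw [hsub]
  push_cast
  field_simp

lemma deriv_phi {α ρ a lam d : ℝ} (hα0 : 0 < α) (hα1 : α < 1) (hρ : 0 < ρ) (ha : 0 < a)
    {s : ℝ} (hs : a < s) :
    s^((1:ℝ)-ρ) * deriv (fun y => d * ((y^ρ - a^ρ)/ρ)^((1:ℝ)-1) *
        ∑' k : ℕ, (lam * ((y^ρ - a^ρ)/ρ)^α)^k / Real.Gamma (α*k+1)) s
      = (d*lam) * ((s^ρ - a^ρ)/ρ)^(α-1) *
        ∑' k : ℕ, (lam * ((s^ρ - a^ρ)/ρ)^α)^k / Real.Gamma (α*k+α) := by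
  have hs0 : 0 < s := ha.trans hs
  have hus : 0 < (s^ρ - a^ρ)/ρ :=
    div_pos (by linarith [Real.rpow_lt_rpow ha.le hs hρ]) hρ
  set us := (s^ρ - a^ρ)/ρ with husdef
  set z := lam * us^α with hz
  have hfun : (fun y => d * ((y^ρ - a^ρ)/ρ)^((1:ℝ)-1) *
        ∑' k : ℕ, (lam * ((y^ρ - a^ρ)/ρ)^α)^k / Real.Gamma (α*k+1))
      = fun y => d * ∑' k : ℕ, (lam * ((y^ρ - a^ρ)/ρ)^α)^k / Real.Gamma (α*k+1) := by
    funext y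
    rw [sub_self, Real.rpow_zero, mul_one]
  rw [hfun]
  have h1 : HasDerivAt (fun y : ℝ => (y^ρ - a^ρ)/ρ) (s^(ρ-1)) s := by
    have := ((Real.hasDerivAt_rpow_const (x := s) (p := ρ)
      (Or.inl hs0.ne')).sub_const (a^ρ)).div_const ρ
    rwa [mul_div_cancel_left₀ _ hρ.ne'] at this
  have h2 : HasDerivAt (fun y : ℝ => lam * ((y^ρ - a^ρ)/ρ)^α)
      (lam * (s^(ρ-1) * α * us^(α-1))) s := by
    exact (h1.rpow_const (Or.inl hus.ne')).const_mul lam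
  have hG := G_hasDerivAt hα0 hα1 one_pos z
  have hcomp : HasDerivAt (fun y => d * ∑' k : ℕ,
        (lam * ((y^ρ - a^ρ)/ρ)^α)^k / Real.Gamma (α*k+1))
      (d * ((∑' k : ℕ, ((k:ℝ) * z^(k-1)) / Real.Gamma (α*k+1)) *
        (lam * (s^(ρ-1) * α * us^(α-1))))) s := by
    have := (hG.comp s h2).const_mul d
    simpa [Function.comp] using this
  rw [hcomp.deriv]
  have hser := series_shift hα0 hα1 z
  have hss : s^((1:ℝ)-ρ) * s^(ρ-1) = 1 := by
    rw [← Real.rpow_add hs0]; norm_num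
  set S1 := ∑' k : ℕ, ((k:ℝ) * z^(k-1)) / Real.Gamma (α*k+1) with hS1
  set S2 := ∑' k : ℕ, z^k / Real.Gamma (α*k+α) with hS2
  linear_combination (d*lam*us^(α-1)*α*S1) * hss + (d*lam*us^(α-1)) * hser

lemma igral_congr {ρ σ a x : ℝ} {f g : ℝ → ℝ} (hax : a < x)
    (h : ∀ y ∈ Ioc a x, f y = g y) : igral ρ σ a f x = igral ρ σ a g x := by
  unfold igral
  by_cases hσ : σ = 0
  · simp only [hσ, if_pos]
    exact h x ⟨hax, le_refl x⟩
  · rw [if_neg hσ, if_neg hσ]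
    congr 1
    rw [intervalIntegral.integral_of_le hax.le, intervalIntegral.integral_of_le hax.le]
    apply setIntegral_congr_fun measurableSet_Ioc
    intro t ht
    dsimp only
    rw [h t ht]

end Aux

/-- The Mittag-Leffler function solves the homogeneous Hilfer–Katugampola
Cauchy problem. -/
theorem homogeneous_cauchy_solution (ρ a b α β γ lam c : ℝ) (hα0 : 0 < α)
    (hα1 : α < 1) (hβ0 : 0 ≤ β) (hβ1 : β ≤ 1) (hγ : γ = α + β * (1 - α))
    (hρ : 0 < ρ) (ha : 0 < a) (hab : a < b) :
    (∀ x ∈ Ioc a b,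
      hkD ρ α β a (fun y => c * ((y ^ ρ - a ^ ρ) / ρ) ^ (γ - 1) *
        ∑' k : ℕ, (lam * ((y ^ ρ - a ^ ρ) / ρ) ^ α) ^ k /
          Real.Gamma (α * k + γ)) x =
        lam * (c * ((x ^ ρ - a ^ ρ) / ρ) ^ (γ - 1) *
          ∑' k : ℕ, (lam * ((x ^ ρ - a ^ ρ) / ρ) ^ α) ^ k /
            Real.Gamma (α * k + γ))) ∧
    Tendsto (igral ρ (1 - γ) a
        (fun y => c * ((y ^ ρ - a ^ ρ) / ρ) ^ (γ - 1) *
          ∑' k : ℕ, (lam * ((y ^ ρ - a ^ ρ) / ρ) ^ α) ^ k /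
            Real.Gamma (α * k + γ)))
      (𝓝[>] a) (𝓝 c) := by
  have hγ0 : 0 < γ := by nlinarith
  have hγ1 : γ ≤ 1 := by nlinarith
  set Φ : ℝ → ℝ := fun y => c * ((y ^ ρ - a ^ ρ) / ρ) ^ (γ - 1) *
      ∑' k : ℕ, (lam * ((y ^ ρ - a ^ ρ) / ρ) ^ α) ^ k / Real.Gamma (α * k + γ) with hΦ
  have hone : γ + (1-β)*(1-α) = 1 := by rw [hγ]; ring
  -- inner fractional integral
  have inner_eq : ∀ y ∈ Ioi a, igral ρ ((1-β)*(1-α)) a Φ y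
      = c * ((y ^ ρ - a ^ ρ) / ρ) ^ ((1:ℝ)-1) *
        ∑' k : ℕ, (lam * ((y ^ ρ - a ^ ρ) / ρ) ^ α) ^ k / Real.Gamma (α * k + 1) := by
    intro y hy
    have := igral_phi (μ := γ) (σ := (1-β)*(1-α)) (lam := lam) (d := c)
      hα0 hα1 hγ0 (by nlinarith) hρ ha hy
    rw [hΦ, this, hone]
  constructor
  · intro x hx
    have hax : a < x := hx.1
    rw [hkD]
    have step1 : ∀ s ∈ Ioc a x,
        s ^ (1 - ρ) * deriv (igral ρ ((1 - β) * (1 - α)) a Φ) s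
          = (c*lam) * ((s^ρ - a^ρ)/ρ)^(α-1) *
            ∑' k : ℕ, (lam * ((s^ρ - a^ρ)/ρ)^α)^k / Real.Gamma (α*k+α) := by
      intro s hs
      have hsa : a < s := hs.1
      have hder_eq : deriv (igral ρ ((1 - β) * (1 - α)) a Φ) s
          = deriv (fun y => c * ((y ^ ρ - a ^ ρ) / ρ) ^ ((1:ℝ)-1) *
              ∑' k : ℕ, (lam * ((y ^ ρ - a ^ ρ) / ρ) ^ α) ^ k / Real.Gamma (α * k + 1)) s := by
        apply Filter.EventuallyEq.deriv_eq
        filter_upwards [isOpen_Ioi.mem_nhds hsa] with y hy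
        exact inner_eq y hy
      rw [hder_eq]
      exact deriv_phi hα0 hα1 hρ ha hsa
    rw [igral_congr hax step1]
    have := igral_phi (μ := α) (σ := β*(1-α)) (lam := lam) (d := c*lam)
      hα0 hα1 hα0 (by nlinarith) hρ ha hax
    rw [this, ← hγ]
    ring
  · -- initial condition
    have houter : ∀ y ∈ Ioi a, igral ρ (1-γ) a Φ y
        = c * ∑' k : ℕ, (lam * ((y ^ ρ - a ^ ρ) / ρ) ^ α) ^ k / Real.Gamma (α * k + 1) := by
      intro y hy
      have := igral_phi (μ := γ) (σ := 1-γ) (lam := lam) (d := c)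
        hα0 hα1 hγ0 (by linarith) hρ ha hy
      rw [hΦ, this, show γ + (1-γ) = 1 by ring, sub_self, Real.rpow_zero, mul_one]
    apply Tendsto.congr' (EventuallyEq.symm
      (eventuallyEq_of_mem self_mem_nhdsWithin houter))
    -- limit of the explicit formula
    have hu : Tendsto (fun y : ℝ => (y^ρ - a^ρ)/ρ) (𝓝[>] a) (𝓝 0) := by
      have hc : ContinuousAt (fun y : ℝ => (y^ρ - a^ρ)/ρ) a :=
        ((Real.continuousAt_rpow_const a ρ (Or.inl ha.ne')).sub
          continuousAt_const).div_const ρ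
      have h4 : Tendsto (fun y : ℝ => (y^ρ - a^ρ)/ρ) (𝓝[>] a) (𝓝 ((a^ρ - a^ρ)/ρ)) :=
        hc.tendsto.mono_left nhdsWithin_le_nhds
      simpa using h4
    have huα : Tendsto (fun y : ℝ => lam * ((y^ρ - a^ρ)/ρ)^α) (𝓝[>] a) (𝓝 0) := by
      have hc0 : ContinuousAt (fun v : ℝ => v ^ α) 0 :=
        Real.continuousAt_rpow_const 0 α (Or.inr hα0.le)
      have h3 := (hc0.tendsto.comp hu).const_mul lam
      rw [Real.zero_rpow hα0.ne', mul_zero] at h3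
      exact h3
    have hGc : ContinuousAt (fun w : ℝ => ∑' k : ℕ, w^k / Real.Gamma (α*k+1)) 0 :=
      (G_hasDerivAt hα0 hα1 one_pos 0).continuousAt
    have hlim := (hGc.tendsto.comp huα).const_mul c
    have hG0 : ∑' k : ℕ, (0:ℝ)^k / Real.Gamma (α*k+1) = 1 := by
      rw [tsum_eq_single 0 (fun k hk => by simp [zero_pow hk])]
      simp [Real.Gamma_one]
    rw [hG0, mul_one] at hlim
    exact hlim
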